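/- Let k ≥ 2 be an integer. If (f,g) with f,g ∈ C₀⁺[0,1] satisfies (H_k f)(t) = g(t) and (H_k g)(t) = f(t) for all t ∈ [0,1], then both f and g belong to the set 𝒫_k = {φ ∈ C[0,1] : (m/M)·(1/M)^{1/(k−1)} ≤ φ(t) ≤ (M/m)·(1/m)^{1/(k−1)} for all t ∈ [0,1]}. -/

import Mathlib

open Set MeasureTheory

/-- The Hammerstein operator `(H_k f)(t) = ∫₀¹ K(t,u) f(u)^k du`. -/
noncomputable def Hk (K : ℝ → ℝ → ℝ) (k : ℕ) (f : ℝ → ℝ) (t : ℝ) : ℝ :=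
  ∫ u in (0:ℝ)..1, K t u * f u ^ k

private lemma root_le {x c : ℝ} (hx : 0 < x) (hc : 0 < c) {n : ℕ} (hn : 0 < n)
    (h : c ≤ x ^ n) : c ^ ((1:ℝ)/(n:ℝ)) ≤ x := by
  have hn' : (n:ℝ) ≠ 0 := Nat.cast_ne_zero.mpr hn.ne'
  calc c ^ ((1:ℝ)/(n:ℝ)) ≤ (x ^ n) ^ ((1:ℝ)/(n:ℝ)) :=
        Real.rpow_le_rpow hc.le h (by positivity)
    _ = (x ^ ((n:ℝ))) ^ ((1:ℝ)/(n:ℝ)) := by rw [Real.rpow_natCast]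
    _ = x ^ ((n:ℝ) * ((1:ℝ)/(n:ℝ))) := by rw [← Real.rpow_mul hx.le]
    _ = x := by rw [mul_one_div, div_self hn', Real.rpow_one]

private lemma le_root {x c : ℝ} (hx : 0 < x) (hc : 0 < c) {n : ℕ} (hn : 0 < n)
    (h : x ^ n ≤ c) : x ≤ c ^ ((1:ℝ)/(n:ℝ)) := by
  have hn' : (n:ℝ) ≠ 0 := Nat.cast_ne_zero.mpr hn.ne'
  calc x = x ^ ((n:ℝ) * ((1:ℝ)/(n:ℝ))) := by
        rw [mul_one_div, div_self hn', Real.rpow_one]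
    _ = (x ^ ((n:ℝ))) ^ ((1:ℝ)/(n:ℝ)) := by rw [← Real.rpow_mul hx.le]
    _ = (x ^ n) ^ ((1:ℝ)/(n:ℝ)) := by rw [Real.rpow_natCast]
    _ ≤ c ^ ((1:ℝ)/(n:ℝ)) := Real.rpow_le_rpow (by positivity) h (by positivity)

private lemma exp_eq {k : ℕ} (hk : 2 ≤ k) :
    ((k*(k+1) : ℕ) : ℝ) * ((1:ℝ)/(((k^2-1 : ℕ)):ℝ)) = (k:ℝ)/((k:ℝ)-1) := by
  have h1 : (1:ℝ) < (k:ℝ) := by exact_mod_cast lt_of_lt_of_le one_lt_two hk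
  have h2 : ((k^2-1 : ℕ) : ℝ) = (k:ℝ)^2 - 1 := by
    have : (1:ℕ) ≤ k^2 := Nat.one_le_pow _ _ (by omega)
    push_cast [Nat.cast_sub this]; ring
  rw [h2]
  have hne : (k:ℝ) - 1 ≠ 0 := sub_ne_zero.mpr h1.ne'
  have hne2 : (k:ℝ) + 1 ≠ 0 := by positivity
  have hne3 : (k:ℝ)^2 - 1 ≠ 0 := by
    have : (k:ℝ)^2 - 1 = ((k:ℝ)-1)*((k:ℝ)+1) := by ring
    rw [this]; exact mul_ne_zero hne hne2
  field_simp
  push_cast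
  ring

/-- Lower bound: if `x ≤ (M*y)^k` and `y ≤ (M*x)^k` then `(1/M)^(k/(k-1)) ≤ x`. -/
private lemma key_lower {M x y : ℝ} (hM : 0 < M) {k : ℕ} (hk : 2 ≤ k)
    (hx : 0 < x) (hy : 0 < y) (h1 : x ≤ (M*y)^k) (h2 : y ≤ (M*x)^k) :
    (1/M) ^ ((k:ℝ)/((k:ℝ)-1)) ≤ x := by
  have hchain : x ≤ M ^ (k*(k+1)) * x ^ (k^2) := by
    calc x ≤ (M*y)^k := h1
      _ ≤ (M * (M*x)^k)^k := by
          apply pow_le_pow_left₀ (by positivity)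
          exact mul_le_mul_of_nonneg_left h2 hM.le
      _ = M ^ (k*(k+1)) * x ^ (k^2) := by ring
  have hnn : 0 < k^2 - 1 := by
    have : 4 ≤ k^2 := by nlinarith
    omega
  have hstep : (1/M) ^ (k*(k+1)) ≤ x ^ (k^2 - 1) := by
    have hdiv : 1 ≤ M ^ (k*(k+1)) * x ^ (k^2 - 1) := by
      have hx2 : x ^ (k^2) = x ^ (k^2 - 1) * x := by
        rw [← pow_succ]; congr 1; omega
      rw [hx2, ← mul_assoc] at hchain
      exact le_of_mul_le_mul_right (by linarith) hx
    have hMk : 0 < M ^ (k*(k+1)) := by positivity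
    rw [div_pow, one_pow, div_le_iff₀ hMk]
    linarith [hdiv]
  have := root_le hx (by positivity) hnn hstep
  calc (1/M) ^ ((k:ℝ)/((k:ℝ)-1))
      = ((1/M) ^ (k*(k+1))) ^ ((1:ℝ)/((k^2-1 : ℕ):ℝ)) := by
        rw [← Real.rpow_natCast (1/M) (k*(k+1)), ← Real.rpow_mul (by positivity),
          exp_eq hk]
    _ ≤ x := this

/-- Upper bound: if `(m*y)^k ≤ x` and `(m*x)^k ≤ y` then `x ≤ (1/m)^(k/(k-1))`. -/
private lemma key_upper {m x y : ℝ} (hm : 0 < m) {k : ℕ} (hk : 2 ≤ k)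
    (hx : 0 < x) (hy : 0 < y) (h1 : (m*y)^k ≤ x) (h2 : (m*x)^k ≤ y) :
    x ≤ (1/m) ^ ((k:ℝ)/((k:ℝ)-1)) := by
  have hchain : m ^ (k*(k+1)) * x ^ (k^2) ≤ x := by
    calc m ^ (k*(k+1)) * x ^ (k^2) = (m * (m*x)^k)^k := by ring
      _ ≤ (m*y)^k := by
          apply pow_le_pow_left₀ (by positivity)
          exact mul_le_mul_of_nonneg_left h2 hm.le
      _ ≤ x := h1
  have hnn : 0 < k^2 - 1 := by
    have : 4 ≤ k^2 := by nlinarith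
    omega
  have hstep : x ^ (k^2 - 1) ≤ (1/m) ^ (k*(k+1)) := by
    have hdiv : m ^ (k*(k+1)) * x ^ (k^2 - 1) ≤ 1 := by
      have hx2 : x ^ (k^2) = x ^ (k^2 - 1) * x := by
        rw [← pow_succ]; congr 1; omega
      rw [hx2, ← mul_assoc] at hchain
      exact le_of_mul_le_mul_right (by linarith) hx
    have hmk : 0 < m ^ (k*(k+1)) := by positivity
    rw [div_pow, one_pow, le_div_iff₀ hmk]
    linarith [hdiv]
  have := le_root hx (by positivity) hnn hstep
  calc x ≤ ((1/m) ^ (k*(k+1))) ^ ((1:ℝ)/((k^2-1 : ℕ):ℝ)) := this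
    _ = (1/m) ^ ((k:ℝ)/((k:ℝ)-1)) := by
        rw [← Real.rpow_natCast (1/m) (k*(k+1)), ← Real.rpow_mul (by positivity),
          exp_eq hk]

theorem stmt_5
    (K : ℝ → ℝ → ℝ) (k : ℕ) (hk : 2 ≤ k)
    (hKcont : ContinuousOn (fun p : ℝ × ℝ => K p.1 p.2) (Icc 0 1 ×ˢ Icc 0 1))
    (hKpos : ∀ t ∈ Icc (0:ℝ) 1, ∀ u ∈ Icc (0:ℝ) 1, 0 < K t u)
    (M m : ℝ)
    (hM : IsGreatest ((fun p : ℝ × ℝ => K p.1 p.2) '' (Icc 0 1 ×ˢ Icc 0 1)) M)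
    (hm : IsLeast ((fun p : ℝ × ℝ => K p.1 p.2) '' (Icc 0 1 ×ˢ Icc 0 1)) m)
    (f g : ℝ → ℝ)
    (hf : ContinuousOn f (Icc 0 1)) (hg : ContinuousOn g (Icc 0 1))
    (hfnonneg : ∀ t ∈ Icc (0:ℝ) 1, 0 ≤ f t)
    (hgnonneg : ∀ t ∈ Icc (0:ℝ) 1, 0 ≤ g t)
    (hfne : ∃ t ∈ Icc (0:ℝ) 1, f t ≠ 0)
    (hgne : ∃ t ∈ Icc (0:ℝ) 1, g t ≠ 0)
    (heq1 : ∀ t ∈ Icc (0:ℝ) 1, Hk K k f t = g t)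
    (heq2 : ∀ t ∈ Icc (0:ℝ) 1, Hk K k g t = f t) :
    (∀ t ∈ Icc (0:ℝ) 1,
      m / M * (1 / M) ^ ((1:ℝ)/((k:ℝ) - 1)) ≤ f t ∧
      f t ≤ M / m * (1 / m) ^ ((1:ℝ)/((k:ℝ) - 1))) ∧
    (∀ t ∈ Icc (0:ℝ) 1,
      m / M * (1 / M) ^ ((1:ℝ)/((k:ℝ) - 1)) ≤ g t ∧
      g t ≤ M / m * (1 / m) ^ ((1:ℝ)/((k:ℝ) - 1))) := by
  have h01 : (0:ℝ) ≤ 1 := zero_le_one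
  -- positivity facts about m, M
  have hmpos : 0 < m := by
    obtain ⟨p, hp, hpe⟩ := hm.1
    rw [← hpe]
    exact hKpos p.1 hp.1 p.2 hp.2
  have hmM : m ≤ M := hm.2 hM.1
  have hMpos : 0 < M := lt_of_lt_of_le hmpos hmM
  have hKlb : ∀ t ∈ Icc (0:ℝ) 1, ∀ u ∈ Icc (0:ℝ) 1, m ≤ K t u := fun t ht u hu =>
    hm.2 ⟨(t,u), ⟨ht, hu⟩, rfl⟩
  have hKub : ∀ t ∈ Icc (0:ℝ) 1, ∀ u ∈ Icc (0:ℝ) 1, K t u ≤ M := fun t ht u hu =>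
    hM.2 ⟨(t,u), ⟨ht, hu⟩, rfl⟩
  -- the key bound lemma for any nonneg continuous φ
  have hbound : ∀ φ : ℝ → ℝ, ContinuousOn φ (Icc 0 1) →
      (∀ u ∈ Icc (0:ℝ) 1, 0 ≤ φ u) → ∀ t ∈ Icc (0:ℝ) 1,
      m * (∫ u in (0:ℝ)..1, φ u ^ k) ≤ Hk K k φ t ∧
      Hk K k φ t ≤ M * (∫ u in (0:ℝ)..1, φ u ^ k) := by
    intro φ hφc hφnn t ht
    have hφk : ContinuousOn (fun u => φ u ^ k) (Icc 0 1) := hφc.pow k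
    have hKt : ContinuousOn (fun u => K t u) (Icc 0 1) := by
      have : ContinuousOn (fun u : ℝ => ((t, u) : ℝ × ℝ)) (Icc 0 1) :=
        (Continuous.prodMk_right t).continuousOn
      exact hKcont.comp this (fun u hu => ⟨ht, hu⟩)
    have hint : IntervalIntegrable (fun u => K t u * φ u ^ k) volume 0 1 :=
      (hKt.mul hφk).intervalIntegrable_of_Icc h01
    have hintl : IntervalIntegrable (fun u => m * φ u ^ k) volume 0 1 :=
      (continuousOn_const.mul hφk).intervalIntegrable_of_Icc h01
    have hintu : IntervalIntegrable (fun u => M * φ u ^ k) volume 0 1 :=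
      (continuousOn_const.mul hφk).intervalIntegrable_of_Icc h01
    constructor
    · have := intervalIntegral.integral_mono_on h01 hintl hint
        (fun u hu => mul_le_mul_of_nonneg_right (hKlb t ht u hu)
          (pow_nonneg (hφnn u hu) k))
      rwa [intervalIntegral.integral_const_mul] at this
    · have := intervalIntegral.integral_mono_on h01 hint hintu
        (fun u hu => mul_le_mul_of_nonneg_right (hKub t ht u hu)
          (pow_nonneg (hφnn u hu) k))
      rwa [intervalIntegral.integral_const_mul] at this
  set A := ∫ u in (0:ℝ)..1, f u ^ k with hA
  set B := ∫ u in (0:ℝ)..1, g u ^ k with hB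
  have hboundf := hbound f hf hfnonneg
  have hboundg := hbound g hg hgnonneg
  -- so for all t : m*A ≤ g t ≤ M*A, m*B ≤ f t ≤ M*B
  have hgbd : ∀ t ∈ Icc (0:ℝ) 1, m * A ≤ g t ∧ g t ≤ M * A := by
    intro t ht
    have := hboundf t ht
    rw [heq1 t ht] at this
    exact this
  have hfbd : ∀ t ∈ Icc (0:ℝ) 1, m * B ≤ f t ∧ f t ≤ M * B := by
    intro t ht
    have := hboundg t ht
    rw [heq2 t ht] at this
    exact this
  have hAnn : 0 ≤ A := intervalIntegral.integral_nonneg h01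
    (fun u hu => pow_nonneg (hfnonneg u hu) k)
  have hBnn : 0 ≤ B := intervalIntegral.integral_nonneg h01
    (fun u hu => pow_nonneg (hgnonneg u hu) k)
  have hApos : 0 < A := by
    rcases hAnn.lt_or_eq with h | h
    · exact h
    · exfalso
      obtain ⟨t, ht, hne⟩ := hgne
      have h1 := (hgbd t ht).2
      have h2 := hgnonneg t ht
      rw [← h] at h1
      simp only [mul_zero] at h1
      exact hne (le_antisymm h1 h2)
  have hBpos : 0 < B := by
    rcases hBnn.lt_or_eq with h | h
    · exact h
    · exfalso
      obtain ⟨t, ht, hne⟩ := hfne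
      have h1 := (hfbd t ht).2
      have h2 := hfnonneg t ht
      rw [← h] at h1
      simp only [mul_zero] at h1
      exact hne (le_antisymm h1 h2)
  -- integral bounds: (m*B)^k ≤ A ≤ (M*B)^k, (m*A)^k ≤ B ≤ (M*A)^k
  have hconst : ∀ c : ℝ, (∫ _ in (0:ℝ)..1, c) = c := by
    intro c; simp
  have hpow_bd : ∀ φ : ℝ → ℝ, ContinuousOn φ (Icc 0 1) →
      ∀ a b : ℝ, 0 ≤ a → (∀ u ∈ Icc (0:ℝ) 1, a ≤ φ u ∧ φ u ≤ b) →
      a ^ k ≤ (∫ u in (0:ℝ)..1, φ u ^ k) ∧ (∫ u in (0:ℝ)..1, φ u ^ k) ≤ b ^ k := by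
    intro φ hφc a b ha hab
    have hφk : ContinuousOn (fun u => φ u ^ k) (Icc 0 1) := hφc.pow k
    have hint : IntervalIntegrable (fun u => φ u ^ k) volume 0 1 :=
      hφk.intervalIntegrable_of_Icc h01
    constructor
    · have := intervalIntegral.integral_mono_on h01 intervalIntegrable_const hint
        (fun u hu => pow_le_pow_left₀ ha (hab u hu).1 k)
      rwa [hconst (a^k)] at this
    · have := intervalIntegral.integral_mono_on h01 hint intervalIntegrable_const
        (fun u hu => pow_le_pow_left₀ (ha.trans (hab u hu).1) (hab u hu).2 k)
      rwa [hconst (b^k)] at this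
  have hmBnn : 0 ≤ m * B := by positivity
  have hmAnn : 0 ≤ m * A := by positivity
  have hAbd := hpow_bd f hf (m*B) (M*B) hmBnn hfbd
  have hBbd := hpow_bd g hg (m*A) (M*A) hmAnn hgbd
  -- key bounds on A and B
  have hBlow : (1/M) ^ ((k:ℝ)/((k:ℝ)-1)) ≤ B :=
    key_lower hMpos hk hBpos hApos hBbd.2 hAbd.2
  have hBhigh : B ≤ (1/m) ^ ((k:ℝ)/((k:ℝ)-1)) :=
    key_upper hmpos hk hBpos hApos hBbd.1 hAbd.1
  have hAlow : (1/M) ^ ((k:ℝ)/((k:ℝ)-1)) ≤ A :=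
    key_lower hMpos hk hApos hBpos hAbd.2 hBbd.2
  have hAhigh : A ≤ (1/m) ^ ((k:ℝ)/((k:ℝ)-1)) :=
    key_upper hmpos hk hApos hBpos hAbd.1 hBbd.1
  -- rewrite targets
  have hkR : (1:ℝ) < (k:ℝ) := by exact_mod_cast lt_of_lt_of_le one_lt_two hk
  have hexp : (k:ℝ)/((k:ℝ)-1) = 1 + (1:ℝ)/((k:ℝ)-1) := by
    have hne : (k:ℝ) - 1 ≠ 0 := sub_ne_zero.mpr hkR.ne'
    field_simp
    ring
  have hlowM : m / M * (1 / M) ^ ((1:ℝ)/((k:ℝ) - 1)) = m * (1/M) ^ ((k:ℝ)/((k:ℝ)-1)) := by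
    rw [hexp, Real.rpow_add (by positivity), Real.rpow_one]
    ring
  have hhighm : M / m * (1 / m) ^ ((1:ℝ)/((k:ℝ) - 1)) = M * (1/m) ^ ((k:ℝ)/((k:ℝ)-1)) := by
    rw [hexp, Real.rpow_add (by positivity), Real.rpow_one]
    ring
  constructor
  · intro t ht
    refine ⟨?_, ?_⟩
    · rw [hlowM]
      calc m * (1/M) ^ ((k:ℝ)/((k:ℝ)-1)) ≤ m * B :=
            mul_le_mul_of_nonneg_left hBlow hmpos.le
        _ ≤ f t := (hfbd t ht).1
    · rw [hhighm]
      calc f t ≤ M * B := (hfbd t ht).2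
        _ ≤ M * (1/m) ^ ((k:ℝ)/((k:ℝ)-1)) :=
            mul_le_mul_of_nonneg_left hBhigh hMpos.le
  · intro t ht
    refine ⟨?_, ?_⟩
    · rw [hlowM]
      calc m * (1/M) ^ ((k:ℝ)/((k:ℝ)-1)) ≤ m * A :=
            mul_le_mul_of_nonneg_left hAlow hmpos.le
        _ ≤ g t := (hgbd t ht).1
    · rw [hhighm]
      calc g t ≤ M * A := (hgbd t ht).2
        _ ≤ M * (1/m) ^ ((k:ℝ)/((k:ℝ)-1)) :=
            mul_le_mul_of_nonneg_left hAhigh hMpos.le
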